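/- arXiv:2211.01905 — 4 statements merged into one kernel-verified Lean document; each statement's English description precedes it below -/
import Mathlib

section
/- Let H be a canonical DAG with at least one arc and let R(H) be its reachability hypergraph. Then the adaptive width of the contour of H is at least the adaptive width of the reachability hypergraph: aw(Γ(H)) ≥ aw(R(H)). -/
noncomputable section

/-! ### Hypergraphs -/

/-- A hypergraph: a vertex set together with a set of nonempty hyperedges. -/
structure Hypergraph' (V : Type) where
  verts : Set V
  edges : Set (Set V)
  edge_nonempty : ∀ e ∈ edges, e.Nonempty
  edge_subset : ∀ e ∈ edges, e ⊆ verts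

namespace Hypergraph'

variable {V : Type}

/-- An independent set: no two of its vertices lie in a common hyperedge. -/
def IsIndepSet (H : Hypergraph' V) (I : Set V) : Prop :=
  I ⊆ H.verts ∧ ∀ u ∈ I, ∀ v ∈ I, u ≠ v → ∀ e ∈ H.edges, ¬(u ∈ e ∧ v ∈ e)

/-- The independence number `α`. -/
def indepNum (H : Hypergraph' V) : ℕ :=
  sSup {n | ∃ I : Set V, H.IsIndepSet I ∧ I.ncard = n}

/-- A fractional independent set: `μ : V(H) → [0,1]` with `∑_{v ∈ e} μ v ≤ 1` for each edge. -/
def IsFracIndep (H : Hypergraph' V) (μ : V → ℝ) : Prop :=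
  (∀ v, 0 ≤ μ v ∧ μ v ≤ 1) ∧ (∀ v, v ∉ H.verts → μ v = 0) ∧
    ∀ e ∈ H.edges, (∑ᶠ v ∈ e, μ v) ≤ 1

/-- The weight of a (fractional independent) vertex-weighting. -/
def weight (H : Hypergraph' V) (μ : V → ℝ) : ℝ := ∑ᶠ v ∈ H.verts, μ v

/-- The fractional independence number `α*`. -/
def fracIndepNum (H : Hypergraph' V) : ℝ :=
  sSup {w | ∃ μ : V → ℝ, H.IsFracIndep μ ∧ H.weight μ = w}

/-- A fractional edge cover of a set `X` of vertices. -/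
def IsFracEdgeCover (H : Hypergraph' V) (X : Set V) (γ : Set V → ℝ) : Prop :=
  (∀ e, 0 ≤ γ e) ∧ (∀ e, e ∉ H.edges → γ e = 0) ∧
    ∀ v ∈ X, 1 ≤ ∑ᶠ e ∈ {e ∈ H.edges | v ∈ e}, γ e

/-- The weight of an edge-weighting. -/
def coverWeight (H : Hypergraph' V) (γ : Set V → ℝ) : ℝ := ∑ᶠ e ∈ H.edges, γ e

/-- `ρ*_H(X)`: the fractional edge cover number of a set `X` of vertices. -/
def fracCoverOf (H : Hypergraph' V) (X : Set V) : ℝ :=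
  sInf {w | ∃ γ : Set V → ℝ, H.IsFracEdgeCover X γ ∧ H.coverWeight γ = w}

/-- The fractional edge cover number `ρ*(H)`. -/
def fracEdgeCoverNum (H : Hypergraph' V) : ℝ := H.fracCoverOf H.verts

/-- A tree decomposition of a hypergraph. -/
structure TreeDecomp (H : Hypergraph' V) where
  n : ℕ
  tree : SimpleGraph (Fin n)
  isTree : tree.IsTree
  bag : Fin n → Set V
  bag_subset : ∀ t, bag t ⊆ H.verts
  verts_covered : ∀ v ∈ H.verts, ∃ t, v ∈ bag t
  edges_covered : ∀ e ∈ H.edges, ∃ t, e ⊆ bag t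
  bags_connected : ∀ (v : V) (t₁ t₂ : Fin n) (h₁ : v ∈ bag t₁) (h₂ : v ∈ bag t₂),
    (tree.induce {t | v ∈ bag t}).Reachable ⟨t₁, h₁⟩ ⟨t₂, h₂⟩

/-- The `μ`-width of a tree decomposition: the maximum `μ`-weight of a bag. -/
def TreeDecomp.muWidth {H : Hypergraph' V} (td : H.TreeDecomp) (μ : V → ℝ) : ℝ :=
  ⨆ t, ∑ᶠ v ∈ td.bag t, μ v

/-- The `μ`-width of a hypergraph: minimum `μ`-width over tree decompositions. -/
def muWidth (H : Hypergraph' V) (μ : V → ℝ) : ℝ :=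
  sInf {w | ∃ td : H.TreeDecomp, td.muWidth μ = w}

/-- The adaptive width `aw(H)`: supremum of the `μ`-widths over fractional
independent sets `μ`. -/
def adaptiveWidth (H : Hypergraph' V) : ℝ :=
  sSup {w | ∃ μ : V → ℝ, H.IsFracIndep μ ∧ H.muWidth μ = w}

/-- The fractional hypertreewidth `fhtw(H)`. -/
def fhtw (H : Hypergraph' V) : ℝ :=
  sInf {w | ∃ td : H.TreeDecomp, (⨆ t, H.fracCoverOf (td.bag t)) = w}

/-- Add a new vertex `v'` to the hypergraph and replace the hyperedge `e` by `e ∪ {v'}`. -/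
def extendEdge (H : Hypergraph' V) (e : Set V) (he : e ∈ H.edges) (v' : V) :
    Hypergraph' V where
  verts := insert v' H.verts
  edges := (H.edges \ {e}) ∪ {insert v' e}
  edge_nonempty := by
    rintro f (⟨hf, -⟩ | hf)
    · exact H.edge_nonempty f hf
    · rw [Set.mem_singleton_iff] at hf; subst hf; exact ⟨v', Set.mem_insert _ _⟩
  edge_subset := by
    rintro f (⟨hf, -⟩ | hf)
    · exact (H.edge_subset f hf).trans (Set.subset_insert _ _)
    · rw [Set.mem_singleton_iff] at hf; subst hf
      exact Set.insert_subset_insert (H.edge_subset e he)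

end Hypergraph'

/-! ### Digraphs -/

namespace Digraph

variable {V A B : Type}

/-- `u` reaches `v` by a directed path (possibly of length 0). -/
def Reaches (G : Digraph V) (u v : V) : Prop := Relation.ReflTransGen G.Adj u v

/-- `R(u)`: the set of vertices reachable from `u` (including `u`). -/
def reachSet (G : Digraph V) (u : V) : Set V := {v | G.Reaches u v}

/-- The setoid whose classes are the strongly connected components. -/
def sccSetoid (G : Digraph V) : Setoid V where
  r u v := G.Reaches u v ∧ G.Reaches v u
  iseqv := ⟨fun _ => ⟨.refl, .refl⟩, fun h => ⟨h.2, h.1⟩,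
    fun h₁ h₂ => ⟨h₁.1.trans h₂.1, h₂.2.trans h₁.2⟩⟩

/-- The condensation `H/∼`: the loop-free DAG obtained by contracting each strongly
connected component to a single vertex. -/
def cond (G : Digraph V) : Digraph (Quotient G.sccSetoid) where
  Adj X Y := X ≠ Y ∧ ∃ a b, Quotient.mk G.sccSetoid a = X ∧
    Quotient.mk G.sccSetoid b = Y ∧ G.Adj a b

/-- `v` lies in a source component: its strongly connected component is not
reachable from any other component. -/
def InSourceComp (G : Digraph V) (v : V) : Prop := ∀ u, G.Reaches u v → G.Reaches v u

/-- `v` is a source: a vertex of in-degree `0`. -/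
def IsSrc (G : Digraph V) (v : V) : Prop := ∀ u, ¬ G.Adj u v

/-- The reachability hypergraph `R(H)` of a digraph: vertices `V(H)`, one hyperedge
`R(s)` for each (representative `s` of a) source component. -/
def reachHyp (G : Digraph V) : Hypergraph' V where
  verts := Set.univ
  edges := {e | ∃ s, G.InSourceComp s ∧ e = G.reachSet s}
  edge_nonempty := by rintro e ⟨s, -, rfl⟩; exact ⟨s, Relation.ReflTransGen.refl⟩
  edge_subset := fun e _ => Set.subset_univ e

/-- The contour `Γ(H)` of a digraph: the reachability hypergraph with all vertices of
source components deleted (empty hyperedges discarded). -/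
def contour (G : Digraph V) : Hypergraph' V where
  verts := {v | ¬ G.InSourceComp v}
  edges := {e | (∃ s, G.InSourceComp s ∧
    e = G.reachSet s \ {v | G.InSourceComp v}) ∧ e.Nonempty}
  edge_nonempty := fun _ he => he.2
  edge_subset := by rintro e ⟨⟨s, -, rfl⟩, -⟩ v hv; exact hv.2

/-- The reachability hypergraph of a DAG: one hyperedge `R(s)` for each in-degree `0`
vertex `s`. -/
def dagReachHyp (G : Digraph V) : Hypergraph' V where
  verts := Set.univ
  edges := {e | ∃ s, G.IsSrc s ∧ e = G.reachSet s}
  edge_nonempty := by rintro e ⟨s, -, rfl⟩; exact ⟨s, Relation.ReflTransGen.refl⟩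
  edge_subset := fun e _ => Set.subset_univ e

/-- The contour of a DAG: the reachability hypergraph with all sources deleted. -/
def dagContour (G : Digraph V) : Hypergraph' V where
  verts := {v | ¬ G.IsSrc v}
  edges := {e | (∃ s, G.IsSrc s ∧ e = G.reachSet s \ {v | G.IsSrc v}) ∧ e.Nonempty}
  edge_nonempty := fun _ he => he.2
  edge_subset := by rintro e ⟨⟨s, -, rfl⟩, -⟩ v hv; exact hv.2

/-- A homomorphism of digraphs: a map preserving arcs. -/
def IsHom (H : Digraph A) (G : Digraph B) (φ : A → B) : Prop :=
  ∀ ⦃u v⦄, H.Adj u v → G.Adj (φ u) (φ v)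

/-- The tensor product of digraphs. -/
def tensor (G : Digraph A) (F : Digraph B) : Digraph (A × B) where
  Adj x y := G.Adj x.1 y.1 ∧ F.Adj x.2 y.2

/-- The induced subdigraph on a set of vertices. -/
def induce (G : Digraph A) (S : Set A) : Digraph S where
  Adj a b := G.Adj a.1 b.1

/-- The quotient digraph `H/σ` of a digraph by a partition (setoid) of its vertices. -/
def quot (H : Digraph A) (σ : Setoid A) : Digraph (Quotient σ) where
  Adj X Y := ∃ a b, Quotient.mk σ a = X ∧ Quotient.mk σ b = Y ∧ H.Adj a b

/-- A loop-free digraph. -/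
def LoopFree (H : Digraph A) : Prop := ∀ v, ¬ H.Adj v v

/-- A digraph without directed cycles (in particular, without loops). -/
def IsAcyclic (H : Digraph A) : Prop := ∀ u v, H.Adj u v → ¬ H.Reaches v u

/-- A canonical DAG: a DAG in which every vertex has in-degree 0 or out-degree 0. -/
def IsCanonicalDAG (H : Digraph A) : Prop :=
  H.IsAcyclic ∧ ∀ v, (∀ u, ¬ H.Adj u v) ∨ (∀ u, ¬ H.Adj v u)

/-- `t` lies in a sink component: from its strongly connected component no other
component is reachable. -/
def IsSinkVert (H : Digraph A) (t : A) : Prop := ∀ v, H.Reaches t v → H.Reaches v t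

/-- Sink deletion: delete all vertices of the strongly connected component of `t`. -/
def sinkDelete (H : Digraph A) (t : A) :
    Digraph {v : A // ¬ (H.Reaches v t ∧ H.Reaches t v)} where
  Adj a b := H.Adj a.1 b.1

/-- Loop deletion: delete the loop at `u`. -/
def deleteLoop (H : Digraph A) (u : A) : Digraph A where
  Adj a b := H.Adj a b ∧ ¬(a = u ∧ b = u)

/-- The number of sources (in-degree `0` vertices) of the condensation `H/∼`. -/
def numSources (H : Digraph A) : ℕ :=
  {X : Quotient H.sccSetoid | ∀ Y, ¬ H.cond.Adj Y X}.ncard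

end Digraph

/-- The number of homomorphisms from `H` to `G`. -/
def homCount {A B : Type} (H : Digraph A) (G : Digraph B) : ℕ :=
  Nat.card {φ : A → B // H.IsHom G φ}

/-- Two digraphs are isomorphic: a bijection of the vertex sets preserving arcs in
both directions. -/
def DigraphIso {A B : Type} (H : Digraph A) (G : Digraph B) : Prop :=
  ∃ e : A ≃ B, ∀ u v, H.Adj u v ↔ G.Adj (e u) (e v)

/-- The number of subgraphs of `G` (pairs of a vertex subset and an arc subset of `G`
among those vertices) that are isomorphic to `H`. -/
def subCount {A B : Type} (H : Digraph A) (G : Digraph B) : ℕ :=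
  Nat.card {p : Set B × (B → B → Prop) //
    (∀ a b, p.2 a b → a ∈ p.1 ∧ b ∈ p.1 ∧ G.Adj a b) ∧
    DigraphIso H (Digraph.mk fun (a b : p.1) => p.2 a b)}

/-- The number of vertex subsets of `G` inducing a subgraph isomorphic to `H`. -/
def indSubCount {A B : Type} (H : Digraph A) (G : Digraph B) : ℕ :=
  Nat.card {S : Set B // DigraphIso H (G.induce S)}

/-- `H'` is an arc supergraph of the loop-free digraph `H`: a loop-free digraph on the
same vertex set whose arc set contains that of `H`. -/
def ArcSupergraph {A : Type} (H H' : Digraph A) : Prop :=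
  H'.LoopFree ∧ ∀ u v, H.Adj u v → H'.Adj u v

/-- The setoid identifying exactly `u` and `v`. -/
def pairSetoid {A : Type} (u v : A) : Setoid A where
  r a b := a = b ∨ (a ∈ ({u, v} : Set A) ∧ b ∈ ({u, v} : Set A))
  iseqv := by
    refine ⟨fun _ => Or.inl rfl, ?_, ?_⟩
    · rintro a b (rfl | ⟨h₁, h₂⟩)
      · exact Or.inl rfl
      · exact Or.inr ⟨h₂, h₁⟩
    · rintro a b c (rfl | ⟨h₁, h₂⟩) h
      · exact h
      · rcases h with rfl | ⟨h₃, h₄⟩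
        · exact Or.inr ⟨h₁, h₂⟩
        · exact Or.inr ⟨h₁, h₄⟩

/-- Arc contraction: identify the endpoints of the arc `(u,v)`; arcs between `u` and
`v` do not yield a loop. -/
def Digraph.contractArc {A : Type} (H : Digraph A) (u v : A) :
    Digraph (Quotient (pairSetoid u v)) where
  Adj X Y := ∃ a b, Quotient.mk (pairSetoid u v) a = X ∧ Quotient.mk (pairSetoid u v) b = Y ∧
    H.Adj a b ∧ ¬(a ≠ b ∧ a ∈ ({u, v} : Set A) ∧ b ∈ ({u, v} : Set A))

/-- `MRMinor M H`: `M` is a monotone reversible minor of `H`, i.e. `M` can be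
obtained (up to isomorphism) from `H` by a finite sequence of sink deletions,
arc contractions, and loop deletions. -/
inductive MRMinor : ∀ {A : Type}, Digraph A → ∀ {B : Type}, Digraph B → Prop
  | of_iso {A B : Type} {M : Digraph A} {H : Digraph B} :
      DigraphIso M H → MRMinor M H
  | sink_del {A B : Type} {M : Digraph A} {H : Digraph B} (t : B) :
      H.IsSinkVert t → MRMinor M (H.sinkDelete t) → MRMinor M H
  | contract {A B : Type} {M : Digraph A} {H : Digraph B} (u v : B) :
      H.Adj u v → MRMinor M (H.contractArc u v) → MRMinor M H
  | loop_del {A B : Type} {M : Digraph A} {H : Digraph B} (u : B) :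
      H.Adj u u → MRMinor M (H.deleteLoop u) → MRMinor M H

/-- `SinkDelSeq H F`: `F` is obtained from `H` by a finite sequence of sink deletions. -/
inductive SinkDelSeq : ∀ {A : Type}, Digraph A → ∀ {B : Type}, Digraph B → Prop
  | refl {A : Type} (H : Digraph A) : SinkDelSeq H H
  | step {A : Type} {H : Digraph A} (t : A) {B : Type} {F : Digraph B} :
      H.IsSinkVert t → SinkDelSeq (H.sinkDelete t) F → SinkDelSeq H F

/-- The directed split of an undirected graph `F`: vertices `V(F) ⊕ E(F)`, with arcs
from each edge `e = {u,v}` to `u` and to `v`. -/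
def dsplit {α : Type} (F : SimpleGraph α) : Digraph (α ⊕ F.edgeSet) where
  Adj x y :=
    match x, y with
    | Sum.inr e, Sum.inl u => u ∈ e.1
    | _, _ => False

/-- `D` has an induced matching gadget of size `k`: arcs `(s i, w i)` with the `w i`
pairwise distinct such that no source of `D` reaches two distinct `w i`. -/
def HasIMG {A : Type} (D : Digraph A) (k : ℕ) : Prop :=
  ∃ s w : Fin k → A, (∀ i, D.Adj (s i) (w i)) ∧ Function.Injective w ∧
    ∀ x, D.IsSrc x → ∀ i j, D.Reaches x (w i) → D.Reaches x (w j) → i = j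

/-- The maximum size of an induced matching gadget of `D`. -/
def imgNum {A : Type} (D : Digraph A) : ℕ := sSup {k | HasIMG D k}

/-- A fractional cover of a DAG `D`: nonnegative weights on the sources such that each
non-source is covered with total weight at least 1; the total weight is at least 1. -/
def Digraph.IsFracCover {A : Type} (D : Digraph A) (ψ : A → ℝ) : Prop :=
  (∀ s, 0 ≤ ψ s) ∧ (∀ s, ¬ D.IsSrc s → ψ s = 0) ∧
    (∀ v, ¬ D.IsSrc v → 1 ≤ ∑ᶠ s ∈ {s | D.IsSrc s ∧ v ∈ D.reachSet s}, ψ s) ∧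
    1 ≤ ∑ᶠ s ∈ {s | D.IsSrc s}, ψ s

/-- The fractional cover number of a DAG: the minimum weight of a fractional cover. -/
def Digraph.dagFracCoverNum {A : Type} (D : Digraph A) : ℝ :=
  sInf {w | ∃ ψ : A → ℝ, D.IsFracCover ψ ∧ (∑ᶠ s ∈ {s | D.IsSrc s}, ψ s) = w}

/-- The fractional cover number `ρ*(H)` of a digraph: the fractional cover number of
its condensation. -/
def Digraph.fracCoverNum {A : Type} (G : Digraph A) : ℝ := G.cond.dagFracCoverNum



/-! ### Auxiliary machinery -/

section AuxTree
open SimpleGraph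

/-- Tree with pendant leaves attached. -/
def leafExt {n' : ℕ} (T : SimpleGraph (Fin n')) {β : Type} (f : β → Fin n') :
    SimpleGraph (Fin n' ⊕ β) where
  Adj x y := (∃ a b, T.Adj a b ∧ x = .inl a ∧ y = .inl b) ∨
    (∃ b, x = .inl (f b) ∧ y = .inr b) ∨ (∃ b, x = .inr b ∧ y = .inl (f b))
  symm := ⟨by
    rintro x y (⟨a, b, h, rfl, rfl⟩ | ⟨b, rfl, rfl⟩ | ⟨b, rfl, rfl⟩)
    · exact Or.inl ⟨b, a, h.symm, rfl, rfl⟩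
    · exact Or.inr (Or.inr ⟨b, rfl, rfl⟩)
    · exact Or.inr (Or.inl ⟨b, rfl, rfl⟩)⟩
  loopless := ⟨by
    rintro x (⟨a, b, h, rfl, he⟩ | ⟨b, he, h2⟩ | ⟨b, h2, he⟩)
    · rw [Sum.inl.injEq] at he; subst he; exact T.loopless.irrefl _ h
    · rw [h2] at he; simp at he
    · rw [h2] at he; simp at he⟩

variable {n' : ℕ} {T : SimpleGraph (Fin n')} {β : Type} {f : β → Fin n'}

lemma leafExt_adj_inl_inl {a b : Fin n'} (h : (leafExt T f).Adj (.inl a) (.inl b)) : T.Adj a b := by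
  rcases h with ⟨a', b', h, ha, hb⟩ | ⟨b', h1, h2⟩ | ⟨b', h1, h2⟩
  · rw [Sum.inl.injEq] at ha hb; subst ha; subst hb; exact h
  · simp at h2
  · simp at h1

lemma leafExt_adj_inr {b : β} {y : Fin n' ⊕ β} (h : (leafExt T f).Adj (.inr b) y) :
    y = .inl (f b) := by
  rcases h with ⟨a', b', h, ha, hb⟩ | ⟨b', h1, h2⟩ | ⟨b', h1, h2⟩
  · simp at ha
  · simp at h1
  · rw [Sum.inr.injEq] at h1; subst h1; exact h2

lemma leafExt_adj_leaf (b : β) : (leafExt T f).Adj (.inr b) (.inl (f b)) :=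
  Or.inr (Or.inr ⟨b, rfl, rfl⟩)

lemma leafExt_adj_of_adj {a b : Fin n'} (h : T.Adj a b) :
    (leafExt T f).Adj (.inl a) (.inl b) := Or.inl ⟨_, _, h, rfl, rfl⟩

/-- The inclusion homomorphism. -/
def leafExtHom : T →g leafExt T f where
  toFun := Sum.inl
  map_rel' := fun h => Or.inl ⟨_, _, h, rfl, rfl⟩

lemma leafExt_no_inr_in_cycle {v : Fin n' ⊕ β} {c : (leafExt T f).Walk v v}
    (hc : c.IsCycle) (b : β) : Sum.inr b ∉ c.support := by
  classical
  intro hmem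
  have hc' := hc.rotate hmem
  obtain ⟨w, hadj, q, hq⟩ := Walk.not_nil_iff.mp hc'.not_nil
  have hw : w = Sum.inl (f b) := leafExt_adj_inr hadj
  subst hw
  rw [hq, Walk.cons_isCycle_iff] at hc'
  have hne : (Sum.inr b : Fin n' ⊕ β) ≠ Sum.inl (f b) := by simp
  obtain ⟨w2, hadj2, q2, hq2⟩ := Walk.exists_eq_cons_of_ne hne q.reverse
  have hw2 : w2 = Sum.inl (f b) := leafExt_adj_inr hadj2
  subst hw2
  have hmm : s(Sum.inr b, Sum.inl (f b)) ∈ q.reverse.edges := by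
    rw [hq2, Walk.edges_cons]; exact List.mem_cons_self
  rw [Walk.edges_reverse, List.mem_reverse] at hmm
  exact hc'.2 hmm

lemma leafExt_pull {x y : Fin n' ⊕ β} (p : (leafExt T f).Walk x y)
    (hp : ∀ z ∈ p.support, ∃ t, z = Sum.inl t) {a b : Fin n'}
    (hx : x = Sum.inl a) (hy : y = Sum.inl b) :
    ∃ q : T.Walk a b, q.support.map Sum.inl = p.support ∧
      q.edges.map (Sym2.map Sum.inl) = p.edges := by
  induction p generalizing a b with
  | nil =>
    subst hx
    rw [Sum.inl.injEq] at hy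
    subst hy
    exact ⟨Walk.nil, by simp, by simp⟩
  | @cons x w y hadj p ih =>
    subst hx; subst hy
    obtain ⟨tw, htw⟩ := hp w (by simp)
    subst htw
    have hT : T.Adj a tw := leafExt_adj_inl_inl hadj
    obtain ⟨q, hs, he⟩ := ih (fun z hz => hp z (by simp [hz])) rfl rfl
    refine ⟨Walk.cons hT q, ?_, ?_⟩
    · rw [Walk.support_cons, Walk.support_cons, List.map_cons, hs]
    · rw [Walk.edges_cons, Walk.edges_cons, List.map_cons, he, Sym2.map_pair_eq]

lemma leafExt_isTree (hT : T.IsTree) : (leafExt T f).IsTree := by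
  constructor
  · -- connectivity
    have hne : Nonempty (Fin n') := hT.isConnected.nonempty
    refine ⟨?_⟩
    have key : ∀ x : Fin n' ⊕ β, ∃ t : Fin n', (leafExt T f).Reachable x (Sum.inl t) := by
      rintro (t | b)
      · exact ⟨t, Reachable.refl _⟩
      · exact ⟨f b, (leafExt_adj_leaf b).reachable⟩
    intro x y
    obtain ⟨tx, hx⟩ := key x
    obtain ⟨ty, hy⟩ := key y
    refine hx.trans (Reachable.trans ?_ hy.symm)
    exact (hT.isConnected.preconnected tx ty).map (leafExtHom (f := f))
  · -- acyclicity
    intro v c hc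
    have hsup : ∀ z ∈ c.support, ∃ t, z = Sum.inl t := by
      rintro (t | b) hz
      · exact ⟨t, rfl⟩
      · exact absurd hz (leafExt_no_inr_in_cycle hc b)
    obtain ⟨a, ha⟩ := hsup v c.start_mem_support
    subst ha
    obtain ⟨q, hs, he⟩ := leafExt_pull c hsup rfl rfl
    have hinj : Function.Injective (Sum.inl : Fin n' → Fin n' ⊕ β) := Sum.inl_injective
    refine hT.IsAcyclic q ?_
    rw [Walk.isCycle_def]
    refine ⟨?_, ?_, ?_⟩
    · rw [Walk.isTrail_def]
      have := hc.isTrail.edges_nodup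
      rw [← he] at this
      exact (List.nodup_map_iff (Sym2.map.injective hinj)).mp this
    · intro hqnil
      have hce : c.edges = [] := by rw [← he, hqnil]; simp
      have h0 : c.length = 0 := by
        have h1 := c.length_edges
        rw [hce] at h1
        simpa using h1.symm
      exact hc.not_nil (Walk.nil_iff_length_eq.mpr h0)
    · have h2 := hc.support_nodup
      have h3 : (List.map (Sum.inl : Fin n' → Fin n' ⊕ β) q.support.tail).Nodup := by
        rw [List.map_tail, hs]; exact h2
      exact (List.nodup_map_iff hinj).mp h3

/-- Transport `IsTree` along a comap by an equivalence. -/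
lemma isTree_comap_equiv {α γ : Type} (e : γ ≃ α) {G : SimpleGraph α} (hG : G.IsTree) :
    (G.comap ⇑e).IsTree := by
  have φ : G.comap ⇑e ≃g G := ⟨e, Iff.rfl⟩
  constructor
  · exact φ.connected_iff.mpr hG.isConnected
  · intro v c hc
    exact hG.IsAcyclic (c.map φ.toHom) (hc.map φ.toEquiv.injective)

end AuxTree

section AuxSum

variable {V : Type} [Fintype V]

lemma fsum_eq (s : Set V) (f : V → ℝ) :
    (∑ᶠ v ∈ s, f v) = ∑ v ∈ (Set.toFinite s).toFinset, f v := by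
  rw [← finsum_mem_coe_finset]
  congr 1
  simp

lemma fsum_nonneg {s : Set V} {f : V → ℝ} (hf : ∀ v, 0 ≤ f v) : 0 ≤ ∑ᶠ v ∈ s, f v := by
  rw [fsum_eq]
  exact Finset.sum_nonneg fun v _ => hf v

lemma fsum_mono_set {s t : Set V} {f : V → ℝ} (hst : s ⊆ t) (hf : ∀ v, 0 ≤ f v) :
    (∑ᶠ v ∈ s, f v) ≤ ∑ᶠ v ∈ t, f v := by
  rw [fsum_eq, fsum_eq]
  exact Finset.sum_le_sum_of_subset_of_nonneg (Set.Finite.toFinset_mono hst)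
    (fun v _ _ => hf v)

lemma fsum_mono_fun {s : Set V} {f g : V → ℝ} (h : ∀ v ∈ s, f v ≤ g v) :
    (∑ᶠ v ∈ s, f v) ≤ ∑ᶠ v ∈ s, g v := by
  rw [fsum_eq, fsum_eq]
  exact Finset.sum_le_sum fun v hv => h v ((Set.Finite.mem_toFinset _).mp hv)

lemma single_le_fsum {s : Set V} {f : V → ℝ} {v : V} (hv : v ∈ s) (hf : ∀ v, 0 ≤ f v) :
    f v ≤ ∑ᶠ w ∈ s, f w := by
  rw [fsum_eq]
  exact Finset.single_le_sum (fun w _ => hf w) ((Set.Finite.mem_toFinset _).mpr hv)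

lemma fsum_le_card {s : Set V} {f : V → ℝ} (hf : ∀ v, f v ≤ 1) :
    (∑ᶠ v ∈ s, f v) ≤ (Fintype.card V : ℝ) := by
  rw [fsum_eq]
  calc ∑ v ∈ (Set.toFinite s).toFinset, f v ≤ ∑ _v ∈ (Set.toFinite s).toFinset, (1 : ℝ) :=
        Finset.sum_le_sum fun v _ => hf v
    _ = ((Set.toFinite s).toFinset.card : ℝ) := by simp
    _ ≤ (Fintype.card V : ℝ) := by
        exact_mod_cast Nat.cast_le.mpr (Finset.card_le_univ _)

end AuxSum


section AuxHyp

variable {V : Type} [Fintype V]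

/-- The trivial tree decomposition with one bag containing everything. -/
def Hypergraph'.trivialTD (Hy : Hypergraph' V) : Hy.TreeDecomp where
  n := 1
  tree := ⊥
  isTree := by
    constructor
    · exact ⟨fun u v => by rw [Subsingleton.elim u v]⟩
    · exact SimpleGraph.isAcyclic_bot
  bag _ := Hy.verts
  bag_subset _ := subset_rfl
  verts_covered v hv := ⟨0, hv⟩
  edges_covered e he := ⟨0, Hy.edge_subset e he⟩
  bags_connected v t₁ t₂ h₁ h₂ := by
    have : (⟨t₁, h₁⟩ : {t // v ∈ (fun _ => Hy.verts) t}) = ⟨t₂, h₂⟩ := Subsingleton.elim _ _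
    rw [this]

lemma Hypergraph'.TreeDecomp.muWidth_nonneg {Hy : Hypergraph' V} (td : Hy.TreeDecomp)
    {μ : V → ℝ} (hμ : ∀ v, 0 ≤ μ v) : 0 ≤ td.muWidth μ := by
  rcases Nat.eq_zero_or_pos td.n with h | h
  · haveI : IsEmpty (Fin td.n) := ⟨fun i => absurd i.2 (by omega)⟩
    unfold Hypergraph'.TreeDecomp.muWidth
    rw [Real.iSup_of_isEmpty]
  · haveI : Nonempty (Fin td.n) := ⟨⟨0, h⟩⟩
    have hb : BddAbove (Set.range fun t => ∑ᶠ v ∈ td.bag t, μ v) :=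
      Set.Finite.bddAbove (Set.finite_range _)
    exact le_trans (fsum_nonneg hμ (s := td.bag ⟨0, h⟩)) (le_ciSup hb ⟨0, h⟩)

lemma Hypergraph'.muWidth_nonneg (Hy : Hypergraph' V) {μ : V → ℝ} (hμ : ∀ v, 0 ≤ μ v) :
    0 ≤ Hy.muWidth μ := by
  refine le_csInf ⟨_, Hy.trivialTD, rfl⟩ ?_
  rintro w ⟨td, rfl⟩
  exact td.muWidth_nonneg hμ

lemma Hypergraph'.muWidth_le_td (Hy : Hypergraph' V) {μ : V → ℝ} (hμ : ∀ v, 0 ≤ μ v)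
    (td : Hy.TreeDecomp) : Hy.muWidth μ ≤ td.muWidth μ := by
  refine csInf_le ⟨0, ?_⟩ ⟨td, rfl⟩
  rintro w ⟨td₂, rfl⟩
  exact td₂.muWidth_nonneg hμ

lemma Hypergraph'.trivialTD_muWidth (Hy : Hypergraph' V) (μ : V → ℝ) :
    Hy.trivialTD.muWidth μ = ∑ᶠ v ∈ Hy.verts, μ v := by
  show (⨆ _t : Fin 1, ∑ᶠ v ∈ Hy.verts, μ v) = ∑ᶠ v ∈ Hy.verts, μ v
  exact ciSup_const

lemma Hypergraph'.muWidth_le_card (Hy : Hypergraph' V) {μ : V → ℝ} (hμ0 : ∀ v, 0 ≤ μ v)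
    (hμ1 : ∀ v, μ v ≤ 1) : Hy.muWidth μ ≤ (Fintype.card V : ℝ) := by
  refine le_trans (Hy.muWidth_le_td hμ0 Hy.trivialTD) ?_
  rw [Hy.trivialTD_muWidth]
  exact fsum_le_card hμ1

lemma Hypergraph'.muWidth_ge_of_forall {Hy : Hypergraph' V} {μ : V → ℝ} {a : ℝ}
    (h : ∀ td : Hy.TreeDecomp, a ≤ td.muWidth μ) : a ≤ Hy.muWidth μ := by
  refine le_csInf ⟨_, Hy.trivialTD, rfl⟩ ?_
  rintro w ⟨td, rfl⟩
  exact h td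

end AuxHyp


section AuxDigraph
open scoped Classical

variable {V : Type} [Fintype V] {H : Digraph V}

lemma Digraph.exists_adj_of_reaches_ne {s v : V} (h : H.Reaches s v) (hne : s ≠ v) :
    ∃ u, H.Adj u v := by
  rcases Relation.ReflTransGen.cases_tail h with h' | ⟨c, -, hc⟩
  · exact absurd h'.symm hne
  · exact ⟨c, hc⟩

lemma Digraph.not_isSrc_of_reaches_ne {s v : V} (h : H.Reaches s v) (hne : s ≠ v) :
    ¬ H.IsSrc v := by
  obtain ⟨u, hu⟩ := Digraph.exists_adj_of_reaches_ne h hne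
  exact fun hsrc => hsrc u hu

lemma Digraph.reachSet_mem_dagReachHyp_edges {s : V} (hs : H.IsSrc s) :
    H.reachSet s ∈ H.dagReachHyp.edges := ⟨s, hs, rfl⟩

/-- The sum of a nonnegative `R(H)`-edge-bounded weighting over a contour edge is at most 1. -/
lemma contour_edge_sum_le {μ : V → ℝ} (hμ : H.dagReachHyp.IsFracIndep μ)
    {e : Set V} (he : e ∈ H.dagContour.edges) : (∑ᶠ v ∈ e, μ v) ≤ 1 := by
  obtain ⟨⟨s, hs, rfl⟩, -⟩ := he
  exact le_trans (fsum_mono_set Set.diff_subset (fun v => (hμ.1 v).1))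
    (hμ.2.2 _ (Digraph.reachSet_mem_dagReachHyp_edges hs))

/-- The node of a contour tree decomposition to which the leaf of a source `s` is attached. -/
def attachNode (H : Digraph V) (td' : H.dagContour.TreeDecomp) (hn' : 0 < td'.n) (s : V) :
    Fin td'.n :=
  if h : (H.reachSet s \ {v | H.IsSrc v}) ∈ H.dagContour.edges then
    (td'.edges_covered _ h).choose
  else ⟨0, hn'⟩

lemma attachNode_spec {td' : H.dagContour.TreeDecomp} {hn' : 0 < td'.n} {s : V}
    (h : (H.reachSet s \ {v | H.IsSrc v}) ∈ H.dagContour.edges) :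
    H.reachSet s \ {v | H.IsSrc v} ⊆ td'.bag (attachNode H td' hn' s) := by
  rw [attachNode, dif_pos h]
  exact (td'.edges_covered _ h).choose_spec

/-- Relabeling equivalence. -/
def tdEquiv (n' : ℕ) : (Fin n' ⊕ V) ≃ Fin (n' + Fintype.card V) :=
  (Equiv.sumCongr (Equiv.refl _) (Fintype.equivFin V)).trans finSumFinEquiv

/-- Extend a tree decomposition of the contour to one of the reachability hypergraph by
attaching, for each source `s`, a leaf bag `R(s)`. -/
def extendTD (H : Digraph V) (td' : H.dagContour.TreeDecomp) (hn' : 0 < td'.n) :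
    H.dagReachHyp.TreeDecomp where
  n := td'.n + Fintype.card V
  tree := (leafExt td'.tree (attachNode H td' hn')).comap ⇑(tdEquiv td'.n).symm
  isTree := isTree_comap_equiv _ (leafExt_isTree td'.isTree)
  bag i := Sum.elim td'.bag (fun s => if H.IsSrc s then H.reachSet s else ∅)
    ((tdEquiv td'.n).symm i)
  bag_subset _ := Set.subset_univ _
  verts_covered v _ := by
    by_cases hv : H.IsSrc v
    · refine ⟨tdEquiv td'.n (Sum.inr v), ?_⟩
      simp only [Equiv.symm_apply_apply, Sum.elim_inr, if_pos hv]
      exact Relation.ReflTransGen.refl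
    · obtain ⟨t, ht⟩ := td'.verts_covered v hv
      exact ⟨tdEquiv td'.n (Sum.inl t), by simpa using ht⟩
  edges_covered e he := by
    obtain ⟨s, hs, rfl⟩ := he
    refine ⟨tdEquiv td'.n (Sum.inr s), ?_⟩
    simp only [Equiv.symm_apply_apply, Sum.elim_inr, if_pos hs]
    exact subset_rfl
  bags_connected v t₁ t₂ h₁ h₂ := by
    classical
    set ι := tdEquiv (V := V) td'.n with hι
    by_cases hv : H.IsSrc v
    · -- the only node containing v is the leaf of v
      have huniq : ∀ i, v ∈ Sum.elim td'.bag
          (fun s => if H.IsSrc s then H.reachSet s else ∅) (ι.symm i) → i = ι (Sum.inr v) := by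
        intro i hi
        have hsy : ι.symm i = Sum.inr v := by
          rcases hx : ι.symm i with t | s
          · rw [hx] at hi
            simp only [Sum.elim_inl] at hi
            exact absurd hv (td'.bag_subset t hi)
          · rw [hx] at hi
            simp only [Sum.elim_inr] at hi
            by_cases hss : H.IsSrc s
            · rw [if_pos hss] at hi
              by_cases hsv : s = v
              · rw [hsv]
              · exact absurd hv (Digraph.not_isSrc_of_reaches_ne hi hsv)
            · rw [if_neg hss] at hi
              exact absurd hi (Set.notMem_empty v)
        rw [← Equiv.apply_symm_apply ι i, hsy]
      have e1 := huniq t₁ h₁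
      have e2 := huniq t₂ h₂
      have : t₁ = t₂ := e1.trans e2.symm
      subst this
      rfl
    · -- v is not a source
      obtain ⟨t_v, htv⟩ := td'.verts_covered v hv
      set B : Fin (td'.n + Fintype.card V) → Set V :=
        fun i => Sum.elim td'.bag (fun s => if H.IsSrc s then H.reachSet s else ∅) (ι.symm i)
        with hB
      set Gr := (leafExt td'.tree (attachNode H td' hn')).comap ⇑ι.symm with hGr
      have hbagv : v ∈ B (ι (Sum.inl t_v)) := by simp [hB, htv]
      have hmem : ∀ (p : {t | v ∈ td'.bag t}), v ∈ B (ι (Sum.inl p.1)) := by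
        intro p
        rw [hB]
        simp only [Equiv.symm_apply_apply, Sum.elim_inl]
        exact p.2
      have reach_inl : ∀ (t : Fin td'.n) (ht : v ∈ td'.bag t),
          (Gr.induce {i | v ∈ B i}).Reachable ⟨ι (Sum.inl t), by simpa [hB] using ht⟩
            ⟨ι (Sum.inl t_v), hbagv⟩ := by
        intro t ht
        have r := td'.bags_connected v t t_v ht htv
        exact r.map (⟨fun p => ⟨ι (Sum.inl p.1), hmem p⟩, fun {p q} hpq => by
          show Gr.Adj _ _
          simp only [hGr, SimpleGraph.comap_adj, SimpleGraph.induce_eq_coe_induce_top, Function.Embedding.coe_subtype, Equiv.symm_apply_apply]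
          exact leafExt_adj_of_adj hpq⟩ :
            td'.tree.induce {t | v ∈ td'.bag t} →g Gr.induce {i | v ∈ B i})
      have reach_all : ∀ (i : Fin (td'.n + Fintype.card V)) (hi : v ∈ B i),
          (Gr.induce {i | v ∈ B i}).Reachable ⟨i, hi⟩ ⟨ι (Sum.inl t_v), hbagv⟩ := by
        intro i hi
        rcases hx : ι.symm i with t | s
        · have hit : i = ι (Sum.inl t) := by rw [← Equiv.apply_symm_apply ι i, hx]
          subst hit
          have ht : v ∈ td'.bag t := by
            have := hi; rw [hB] at this; simp only [Equiv.symm_apply_apply] at this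
            simpa using this
          exact reach_inl t ht
        · have hit : i = ι (Sum.inr s) := by rw [← Equiv.apply_symm_apply ι i, hx]
          subst hit
          have hi' : v ∈ (if H.IsSrc s then H.reachSet s else ∅) := by
            have := hi; rw [hB] at this; simp only [Equiv.symm_apply_apply] at this
            simpa using this
          by_cases hss : H.IsSrc s
          · rw [if_pos hss] at hi'
            have hedge : (H.reachSet s \ {v | H.IsSrc v}) ∈ H.dagContour.edges :=
              ⟨⟨s, hss, rfl⟩, ⟨v, hi', hv⟩⟩
            have hvbag : v ∈ td'.bag (attachNode H td' hn' s) :=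
              attachNode_spec hedge ⟨hi', hv⟩
            have hadj : Gr.Adj (ι (Sum.inr s)) (ι (Sum.inl (attachNode H td' hn' s))) := by
              simp only [hGr, SimpleGraph.comap_adj, SimpleGraph.induce_eq_coe_induce_top, Function.Embedding.coe_subtype, Equiv.symm_apply_apply]
              exact leafExt_adj_leaf s
            have hstep : (Gr.induce {i | v ∈ B i}).Adj
                ⟨ι (Sum.inr s), hi⟩ ⟨ι (Sum.inl (attachNode H td' hn' s)), by simpa [hB] using hvbag⟩ :=
              hadj
            exact hstep.reachable.trans (reach_inl _ hvbag)
          · rw [if_neg hss] at hi'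
            exact absurd hi' (Set.notMem_empty v)
      exact (reach_all t₁ h₁).trans (reach_all t₂ h₂).symm

end AuxDigraph


section AuxMain

variable {V : Type} [Fintype V] {H : Digraph V}

lemma extendTD_muWidth_le (td' : H.dagContour.TreeDecomp) (hn' : 0 < td'.n)
    {μ μ' : V → ℝ} (hμ0 : ∀ v, 0 ≤ μ v) (hμ'0 : ∀ v, 0 ≤ μ' v)
    (hedge : ∀ e ∈ H.dagReachHyp.edges, (∑ᶠ v ∈ e, μ v) ≤ 1)
    (hle : ∀ v, ¬H.IsSrc v → μ v ≤ μ' v)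
    (hsat : ∃ e ∈ H.dagContour.edges, 1 ≤ ∑ᶠ v ∈ e, μ' v) :
    (extendTD H td' hn').muWidth μ ≤ td'.muWidth μ' := by
  classical
  have hbdd : BddAbove (Set.range fun t => ∑ᶠ v ∈ td'.bag t, μ' v) :=
    Set.Finite.bddAbove (Set.finite_range _)
  have hbound : ∀ t, (∑ᶠ v ∈ td'.bag t, μ' v) ≤ td'.muWidth μ' := fun t => le_ciSup hbdd t
  have h1le : (1 : ℝ) ≤ td'.muWidth μ' := by
    obtain ⟨e, he, hsum⟩ := hsat
    obtain ⟨t, ht⟩ := td'.edges_covered e he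
    exact le_trans (le_trans hsum (fsum_mono_set ht hμ'0)) (hbound t)
  haveI : Nonempty (Fin (td'.n + Fintype.card V)) := ⟨⟨0, by omega⟩⟩
  show (⨆ i : Fin (td'.n + Fintype.card V), ∑ᶠ v ∈ (extendTD H td' hn').bag i, μ v) ≤
    td'.muWidth μ'
  refine ciSup_le fun i => ?_
  show (∑ᶠ v ∈ Sum.elim td'.bag (fun s => if H.IsSrc s then H.reachSet s else ∅)
      ((tdEquiv td'.n).symm i), μ v) ≤ td'.muWidth μ'
  rcases hx : (tdEquiv (V := V) td'.n).symm i with t | s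
  · simp only [Sum.elim_inl]
    exact le_trans (fsum_mono_fun fun v hv => hle v (td'.bag_subset t hv)) (hbound t)
  · simp only [Sum.elim_inr]
    by_cases hs : H.IsSrc s
    · rw [if_pos hs]
      exact le_trans (hedge _ ⟨s, hs, rfl⟩) h1le
    · rw [if_neg hs, finsum_mem_empty]
      exact le_trans zero_le_one h1le

lemma key_mu (h1 : H.IsCanonicalDAG) (h2 : ∃ u v, H.Adj u v) {μ : V → ℝ}
    (hμ : H.dagReachHyp.IsFracIndep μ) :
    ∃ μ' : V → ℝ, H.dagContour.IsFracIndep μ' ∧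
      H.dagReachHyp.muWidth μ ≤ H.dagContour.muWidth μ' := by
  classical
  obtain ⟨u, v0, huv⟩ := h2
  have hu : H.IsSrc u := by
    rcases h1.2 u with h | h
    · exact h
    · exact absurd huv (h v0)
  have hv0 : ¬ H.IsSrc v0 := fun h => h u huv
  have hv0r : v0 ∈ H.reachSet u := Relation.ReflTransGen.single huv
  have he0 : (H.reachSet u \ {v | H.IsSrc v}) ∈ H.dagContour.edges :=
    ⟨⟨u, hu, rfl⟩, ⟨v0, hv0r, hv0⟩⟩
  set E : Finset (Set V) := (Set.toFinite {e | e ∈ H.dagContour.edges ∧ v0 ∈ e}).toFinset with hE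
  have hE0 : (H.reachSet u \ {v | H.IsSrc v}) ∈ E := by
    rw [hE, Set.Finite.mem_toFinset]; exact ⟨he0, hv0r, hv0⟩
  have hEne : E.Nonempty := ⟨_, hE0⟩
  set δ : ℝ := min (1 - μ v0) (E.inf' hEne (fun e => 1 - ∑ᶠ w ∈ e, μ w)) with hδ
  have hδ0 : 0 ≤ δ := by
    rw [hδ]
    refine le_min (by linarith [(hμ.1 v0).2]) ?_
    refine Finset.le_inf' hEne _ ?_
    intro e he
    rw [hE, Set.Finite.mem_toFinset] at he
    have := contour_edge_sum_le hμ he.1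
    linarith
  set μ' : V → ℝ := fun x => if H.IsSrc x then 0 else if x = v0 then μ x + δ else μ x with hμ'
  have hμ'v : ∀ x, ¬H.IsSrc x → μ x ≤ μ' x := by
    intro x hx
    rw [hμ']
    simp only [if_neg hx]
    split
    · linarith
    · exact le_rfl
  have hμ'0 : ∀ x, 0 ≤ μ' x := by
    intro x
    rw [hμ']
    dsimp only
    split
    · exact le_rfl
    · split
      · linarith [(hμ.1 x).1]
      · exact (hμ.1 x).1
  have hμ'1 : ∀ x, μ' x ≤ 1 := by
    intro x
    rw [hμ']
    dsimp only
    split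
    · exact zero_le_one
    · split
      · next _ hxv =>
          subst hxv
          have hd : δ ≤ 1 - μ x := min_le_left _ _
          linarith
      · exact (hμ.1 x).2
  have hsum : ∀ e ∈ H.dagContour.edges,
      (∑ᶠ w ∈ e, μ' w) = (∑ᶠ w ∈ e, μ w) + (if v0 ∈ e then δ else 0) := by
    intro e he
    have hsub : e ⊆ {v | ¬ H.IsSrc v} := H.dagContour.edge_subset e he
    rw [fsum_eq, fsum_eq]
    have hcongr : ∀ x ∈ (Set.toFinite e).toFinset, μ' x = μ x + (if x = v0 then δ else 0) := by
      intro x hx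
      rw [Set.Finite.mem_toFinset] at hx
      have hxs : ¬ H.IsSrc x := hsub hx
      rw [hμ']
      simp only [if_neg hxs]
      split
      · rfl
      · rw [add_zero]
    rw [Finset.sum_congr rfl hcongr, Finset.sum_add_distrib, Finset.sum_ite_eq' _ v0 (fun _ => δ)]
    congr 1
    by_cases hv : v0 ∈ e
    · rw [if_pos ((Set.Finite.mem_toFinset _).mpr hv), if_pos hv]
    · rw [if_neg (fun hc => hv ((Set.Finite.mem_toFinset _).mp hc)), if_neg hv]
  have hindep : H.dagContour.IsFracIndep μ' := by
    refine ⟨fun x => ⟨hμ'0 x, hμ'1 x⟩, ?_, ?_⟩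
    · intro x hx
      have hsx : H.IsSrc x := not_not.mp hx
      rw [hμ']
      simp only [if_pos hsx]
    · intro e he
      rw [hsum e he]
      by_cases hv : v0 ∈ e
      · rw [if_pos hv]
        have hδle : δ ≤ 1 - ∑ᶠ w ∈ e, μ w := by
          refine le_trans (min_le_right _ _) (Finset.inf'_le _ ?_)
          rw [hE, Set.Finite.mem_toFinset]
          exact ⟨he, hv⟩
        linarith
      · rw [if_neg hv, add_zero]
        exact contour_edge_sum_le hμ he
  have hsat : ∃ e ∈ H.dagContour.edges, 1 ≤ ∑ᶠ w ∈ e, μ' w := by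
    rcases le_total (1 - μ v0) (E.inf' hEne fun e => 1 - ∑ᶠ w ∈ e, μ w) with hc | hc
    · refine ⟨_, he0, ?_⟩
      have hv0' : μ' v0 = μ v0 + δ := by
        rw [hμ']
        simp [hv0]
      have h1 : μ' v0 = 1 := by
        rw [hv0', hδ, min_eq_left hc]; ring
      rw [← h1]
      exact single_le_fsum (Set.mem_diff_of_mem hv0r hv0) hμ'0
    · obtain ⟨e, heE, hee⟩ := Finset.exists_mem_eq_inf' hEne (fun e => 1 - ∑ᶠ w ∈ e, μ w)
      rw [hE, Set.Finite.mem_toFinset] at heE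
      refine ⟨e, heE.1, ?_⟩
      rw [hsum e heE.1, if_pos heE.2]
      have hde : δ = 1 - ∑ᶠ w ∈ e, μ w := by rw [hδ, min_eq_right hc, hee]
      linarith
  refine ⟨μ', hindep, ?_⟩
  refine Hypergraph'.muWidth_ge_of_forall fun td' => ?_
  have hn' : 0 < td'.n := by
    obtain ⟨t, -⟩ := td'.verts_covered v0 hv0
    exact t.pos
  refine le_trans (H.dagReachHyp.muWidth_le_td (fun x => (hμ.1 x).1) (extendTD H td' hn')) ?_
  exact extendTD_muWidth_le td' hn' (fun x => (hμ.1 x).1) hμ'0 hμ.2.2 hμ'v hsat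

end AuxMain


theorem stmt13 {V : Type} [Fintype V] (H : Digraph V)
    (h1 : H.IsCanonicalDAG) (h2 : ∃ u v, H.Adj u v) :
    H.dagReachHyp.adaptiveWidth ≤ H.dagContour.adaptiveWidth := by
  classical
  have hA : {w | ∃ μ : V → ℝ, H.dagReachHyp.IsFracIndep μ ∧
      H.dagReachHyp.muWidth μ = w}.Nonempty := by
    refine ⟨_, (fun _ => 0 : V → ℝ), ⟨fun v => ⟨le_rfl, zero_le_one⟩, fun v _ => rfl, ?_⟩, rfl⟩
    intro e he
    have : (∑ᶠ v ∈ e, (0 : ℝ)) = 0 := by simp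
    rw [this]
    exact zero_le_one
  have hBdd : BddAbove {w | ∃ μ' : V → ℝ, H.dagContour.IsFracIndep μ' ∧
      H.dagContour.muWidth μ' = w} := by
    refine ⟨(Fintype.card V : ℝ), ?_⟩
    rintro w ⟨μ', hμ', rfl⟩
    exact H.dagContour.muWidth_le_card (fun v => (hμ'.1 v).1) (fun v => (hμ'.1 v).2)
  refine csSup_le hA ?_
  rintro w ⟨μ, hμ, rfl⟩
  obtain ⟨μ', hind, hle⟩ := key_mu h1 h2 hμ
  exact le_trans hle (le_csSup hBdd ⟨μ', hind, rfl⟩)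

end
end

section
/- Let H be a digraph and let (U,V) be an arc of the condensation H/∼ such that U is not a source of H/∼. Then there exists a fractional independent set μ̂ of the contour Γ(H) whose weight equals the fractional independence number α*(Γ(H)) and which satisfies μ̂(v) = 0 for every vertex v of the strongly connected component V. -/
noncomputable section

/-! ### Auxiliary lemmas for Statement 16 -/

lemma fsum_eq_s16 {V : Type} [Fintype V] (S : Set V) (f : V → ℝ) :
    (∑ᶠ x ∈ S, f x) = ∑ x : V, S.indicator f x := by
  rw [finsum_mem_def, finsum_eq_sum_of_fintype]

lemma aux_exists_source {V : Type} [Fintype V] (G : Digraph V) (w : V) :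
    ∃ s, G.InSourceComp s ∧ G.Reaches s w := by
  classical
  let r : V → V → Prop := fun x y => G.Reaches x y ∧ ¬ G.Reaches y x
  have htrans : IsTrans V r := ⟨by
    rintro a b c ⟨h1, h2⟩ ⟨h3, h4⟩
    exact ⟨h1.trans h3, fun h => h4 (h.trans h1)⟩⟩
  have hirrefl : IsIrrefl V r := ⟨fun a h => h.2 h.1⟩
  have hwf := Finite.wellFounded_of_trans_of_irrefl r
  obtain ⟨s, hs, hmin⟩ := hwf.has_min {x | G.Reaches x w} ⟨w, Relation.ReflTransGen.refl⟩
  refine ⟨s, ?_, hs⟩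
  intro x hx
  by_contra hnx
  exact hmin x (hx.trans hs) ⟨hx, hnx⟩

theorem stmt16 {V : Type} [Fintype V] (H : Digraph V) (u v : V)
    (hUV : H.cond.Adj (Quotient.mk H.sccSetoid u) (Quotient.mk H.sccSetoid v))
    (hU : ¬ H.InSourceComp u) :
    ∃ μ : V → ℝ, H.contour.IsFracIndep μ ∧
      H.contour.weight μ = H.contour.fracIndepNum ∧
      ∀ x, H.Reaches x v → H.Reaches v x → μ x = 0 := by
  classical
  obtain ⟨hne, a, b, ha, hb, hab⟩ := hUV
  have hau := Quotient.exact ha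
  have hbv := Quotient.exact hb
  have huv : H.Reaches u v :=
    hau.2.trans ((Relation.ReflTransGen.single hab).trans hbv.1)
  set C : Set V := {x | H.Reaches x v ∧ H.Reaches v x} with hCdef
  have hvns : ¬ H.InSourceComp v := by
    intro h
    exact hne (Quotient.sound ⟨huv, h u huv⟩)
  have hCns : ∀ x ∈ C, ¬ H.InSourceComp x := by
    rintro x ⟨hxv, hvx⟩ hx
    apply hvns
    intro w hwv
    exact hvx.trans (hx w (hwv.trans hvx))
  have huC : u ∉ C := fun h => hne (Quotient.sound ⟨h.1, h.2⟩)
  have huV : u ∈ H.contour.verts := hU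
  have hCV : C ⊆ H.contour.verts := fun x hx => hCns x hx
  have hCu : ∀ e ∈ H.contour.edges, u ∈ e → C ⊆ e := by
    rintro e ⟨⟨s, hs, rfl⟩, -⟩ hu x hx
    exact ⟨(hu.1.trans huv).trans hx.2, hCns x hx⟩
  obtain ⟨s₀, hs₀, hr₀⟩ := aux_exists_source H u
  have hue₀ : u ∈ H.reachSet s₀ \ {x | H.InSourceComp x} := ⟨hr₀, hU⟩
  have he₀ : (H.reachSet s₀ \ {x | H.InSourceComp x}) ∈ H.contour.edges :=
    ⟨⟨s₀, hs₀, rfl⟩, ⟨u, hue₀⟩⟩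
  -- compactness: an optimal fractional independent set exists
  set K : Set (V → ℝ) := {μ | H.contour.IsFracIndep μ} with hKdef
  have hKsub : K ⊆ Set.univ.pi fun _ : V => Set.Icc (0:ℝ) 1 := by
    intro μ hμ x _
    exact ⟨(hμ.1 x).1, (hμ.1 x).2⟩
  have hKclosed : IsClosed K := by
    have hKeq : K = (⋂ x : V, {μ : V → ℝ | μ x ∈ Set.Icc (0:ℝ) 1}) ∩
        ((⋂ x ∈ {x | x ∉ H.contour.verts}, {μ : V → ℝ | μ x = 0}) ∩
         (⋂ e ∈ H.contour.edges, {μ : V → ℝ | ∑ x : V, e.indicator μ x ≤ 1})) := by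
      ext μ
      simp only [hKdef, Set.mem_setOf_eq, Hypergraph'.IsFracIndep, Set.mem_inter_iff,
        Set.mem_iInter, Set.mem_Icc, Set.mem_setOf_eq]
      constructor
      · rintro ⟨h1, h2, h3⟩
        refine ⟨h1, h2, fun e he => ?_⟩
        rw [← fsum_eq_s16]; exact h3 e he
      · rintro ⟨h1, h2, h3⟩
        refine ⟨h1, h2, fun e he => ?_⟩
        rw [fsum_eq_s16]; exact h3 e he
    rw [hKeq]
    refine IsClosed.inter (isClosed_iInter fun x => ?_)
      (IsClosed.inter (isClosed_biInter fun x hx => ?_) (isClosed_biInter fun e he => ?_))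
    · exact isClosed_Icc.preimage (continuous_apply x)
    · exact isClosed_eq (continuous_apply x) continuous_const
    · have hc : Continuous fun μ : V → ℝ => ∑ x : V, e.indicator μ x := by
        refine continuous_finset_sum _ fun x _ => ?_
        by_cases h : x ∈ e
        · simpa [Set.indicator_of_mem h] using continuous_apply x
        · simpa [Set.indicator_of_notMem h] using continuous_const
      exact isClosed_le hc continuous_const
  have hKcpt : IsCompact K :=
    (isCompact_univ_pi fun _ => isCompact_Icc).of_isClosed_subset hKclosed hKsub
  have h0K : (fun _ : V => (0:ℝ)) ∈ K := by
    refine ⟨fun x => ⟨le_refl _, zero_le_one⟩, fun x _ => rfl, fun e he => ?_⟩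
    rw [fsum_eq_s16]; simp
  have hwc : Continuous fun μ : V → ℝ => H.contour.weight μ := by
    have heq : (fun μ : V → ℝ => H.contour.weight μ)
        = fun μ => ∑ x : V, (H.contour.verts).indicator μ x := by
      funext μ; exact fsum_eq_s16 _ _
    rw [heq]
    refine continuous_finset_sum _ fun x _ => ?_
    by_cases h : x ∈ H.contour.verts
    · simpa [Set.indicator_of_mem h] using continuous_apply x
    · simpa [Set.indicator_of_notMem h] using continuous_const
  obtain ⟨μ₀, hμ₀K, hmax⟩ := hKcpt.exists_isMaxOn ⟨_, h0K⟩ hwc.continuousOn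
  have hnum : H.contour.fracIndepNum = H.contour.weight μ₀ := by
    apply IsGreatest.csSup_eq
    constructor
    · exact ⟨μ₀, hμ₀K, rfl⟩
    · rintro w ⟨μ, hμ, rfl⟩
      exact hmax hμ
  obtain ⟨h01, hz, hE⟩ := hμ₀K
  set m : ℝ := ∑ x : V, C.indicator μ₀ x with hm
  have hm0 : 0 ≤ m :=
    Finset.sum_nonneg fun x _ => Set.indicator_nonneg (fun y _ => (h01 y).1) x
  set μh : V → ℝ := fun x => if x ∈ C then 0 else if x = u then μ₀ u + m else μ₀ x with hμh
  have key : ∀ S : Set V, u ∈ S → C ⊆ S →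
      (∑ x : V, S.indicator μh x) = ∑ x : V, S.indicator μ₀ x := by
    intro S huS hCS
    have hpt : ∀ x, S.indicator μh x
        = S.indicator μ₀ x + (if x = u then m else 0) - C.indicator μ₀ x := by
      intro x
      by_cases hxC : x ∈ C
      · have hxu : x ≠ u := fun h => huC (h ▸ hxC)
        simp [Set.indicator_of_mem (hCS hxC), Set.indicator_of_mem hxC, hμh, hxC, hxu]
      · by_cases hxu : x = u
        · subst hxu
          simp [Set.indicator_of_mem huS, Set.indicator_of_notMem hxC, hμh, hxC]
        · by_cases hxS : x ∈ S
          · simp [Set.indicator_of_mem hxS, Set.indicator_of_notMem hxC, hμh, hxC, hxu]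
          · simp [Set.indicator_of_notMem hxS, Set.indicator_of_notMem hxC, hμh, hxC, hxu]
    calc ∑ x : V, S.indicator μh x
        = ∑ x : V, (S.indicator μ₀ x + (if x = u then m else 0) - C.indicator μ₀ x) :=
          Finset.sum_congr rfl fun x _ => hpt x
      _ = ∑ x : V, S.indicator μ₀ x := by
          rw [Finset.sum_sub_distrib, Finset.sum_add_distrib,
            Finset.sum_ite_eq' Finset.univ u]
          simp [← hm]
  have hedge : ∀ e ∈ H.contour.edges, (∑ x : V, e.indicator μh x) ≤ 1 := by
    intro e he
    by_cases hue : u ∈ e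
    · rw [key e hue (hCu e he hue)]
      have h1 := hE e he
      rwa [fsum_eq_s16] at h1
    · have hle : ∀ x, e.indicator μh x ≤ e.indicator μ₀ x := by
        intro x
        by_cases hxe : x ∈ e
        · rw [Set.indicator_of_mem hxe, Set.indicator_of_mem hxe]
          have hxu : x ≠ u := fun h => hue (h ▸ hxe)
          by_cases hxC : x ∈ C
          · simp only [hμh]
            rw [if_pos hxC]
            exact (h01 x).1
          · simp only [hμh]
            rw [if_neg hxC, if_neg hxu]
        · simp [Set.indicator_of_notMem hxe]
      calc ∑ x : V, e.indicator μh x ≤ ∑ x : V, e.indicator μ₀ x :=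
            Finset.sum_le_sum fun x _ => hle x
        _ ≤ 1 := by have h1 := hE e he; rwa [fsum_eq_s16] at h1
  have hub : μ₀ u + m ≤ 1 := by
    have hCe₀ : C ⊆ H.reachSet s₀ \ {x | H.InSourceComp x} := hCu _ he₀ hue₀
    have hpt : ∀ x, (if x = u then μ₀ u else 0) + C.indicator μ₀ x
        ≤ (H.reachSet s₀ \ {x | H.InSourceComp x}).indicator μ₀ x := by
      intro x
      by_cases hxu : x = u
      · subst hxu
        rw [if_pos rfl, Set.indicator_of_notMem huC, Set.indicator_of_mem hue₀]
        simp
      · rw [if_neg hxu]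
        by_cases hxC : x ∈ C
        · rw [Set.indicator_of_mem hxC, Set.indicator_of_mem (hCe₀ hxC)]
          simp
        · rw [Set.indicator_of_notMem hxC]
          simpa using Set.indicator_nonneg (fun y _ => (h01 y).1) x
    have h1 : μ₀ u + m ≤ ∑ x : V, (H.reachSet s₀ \ {x | H.InSourceComp x}).indicator μ₀ x := by
      have h2 := Finset.sum_le_sum (s := Finset.univ) fun x _ => hpt x
      rwa [Finset.sum_add_distrib, Finset.sum_ite_eq' Finset.univ u,
        if_pos (Finset.mem_univ u), ← hm] at h2
    have h2 := hE _ he₀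
    rw [fsum_eq_s16] at h2
    exact h1.trans h2
  have hμh01 : ∀ x, 0 ≤ μh x ∧ μh x ≤ 1 := by
    intro x
    simp only [hμh]
    by_cases hxC : x ∈ C
    · rw [if_pos hxC]
      exact ⟨le_refl _, zero_le_one⟩
    · rw [if_neg hxC]
      by_cases hxu : x = u
      · rw [if_pos hxu]
        exact ⟨add_nonneg (h01 u).1 hm0, hub⟩
      · rw [if_neg hxu]; exact h01 x
  have hμhz : ∀ x, x ∉ H.contour.verts → μh x = 0 := by
    intro x hx
    have hxs : H.InSourceComp x := by
      by_contra h; exact hx h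
    have hxC : x ∉ C := fun h => hCns x h hxs
    have hxu : x ≠ u := fun h => hU (h ▸ hxs)
    simp only [hμh]
    rw [if_neg hxC, if_neg hxu]
    exact hz x hx
  have hfrac : H.contour.IsFracIndep μh := by
    refine ⟨hμh01, hμhz, fun e he => ?_⟩
    rw [fsum_eq_s16]
    exact hedge e he
  have hwt : H.contour.weight μh = H.contour.weight μ₀ := by
    unfold Hypergraph'.weight
    rw [fsum_eq_s16, fsum_eq_s16]
    exact key _ huV hCV
  refine ⟨μh, hfrac, ?_, ?_⟩
  · rw [hwt, hnum]
  · intro x h1 h2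
    simp only [hμh]
    rw [if_pos (show x ∈ C from ⟨h1, h2⟩)]


end
end

section
/- Let F be an undirected graph with k vertices and ℓ edges, and let H be a loop-free digraph whose condensation H/∼ has at least k+ℓ sources, i.e., s(H) ≥ k+ℓ. Then there exists an arc supergraph H' of H such that the directed split dsplit(F) is an MR minor of H'. -/
noncomputable section

/-! ### Auxiliary lemmas for Statement 18 -/

section Aux18

open Relation

lemma digraphIso_refl {A : Type} (M : Digraph A) : DigraphIso M M :=
  ⟨Equiv.refl A, fun _ _ => Iff.rfl⟩

lemma digraphIso_trans {A B C : Type} {M : Digraph A} {N : Digraph B} {P : Digraph C}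
    (h₁ : DigraphIso M N) (h₂ : DigraphIso N P) : DigraphIso M P := by
  obtain ⟨e, he⟩ := h₁; obtain ⟨f, hf⟩ := h₂
  exact ⟨e.trans f, fun u v => (he u v).trans (hf _ _)⟩

lemma mrminor_iso_left : ∀ {B : Type} {M' : Digraph B} {C : Type} {H : Digraph C},
    MRMinor M' H → ∀ {A : Type} {M : Digraph A}, DigraphIso M M' → MRMinor M H := by
  intro B M' C H hm
  induction hm with
  | of_iso h2 => intro A M h; exact .of_iso (digraphIso_trans h h2)
  | sink_del t ht _ ih => intro A M h; exact .sink_del t ht (ih h)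
  | contract u v huv _ ih => intro A M h; exact .contract u v huv (ih h)
  | loop_del u hu _ ih => intro A M h; exact .loop_del u hu (ih h)

/-- The loop-free quotient of a digraph by a setoid. -/
def lfQuot {A : Type} (D : Digraph A) (σ : Setoid A) : Digraph (Quotient σ) :=
  ⟨fun X Y => X ≠ Y ∧ (D.quot σ).Adj X Y⟩

lemma quot_adj_iff {A : Type} (D : Digraph A) (σ : Setoid A) (X Y : Quotient σ) :
    (D.quot σ).Adj X Y ↔ ∃ a b, Quotient.mk σ a = X ∧ Quotient.mk σ b = Y ∧ D.Adj a b :=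
  Iff.rfl

/-- Key contraction lemma: if every class of `σ` is strongly connected within the
class, then any digraph isomorphic to the loop-free quotient of `D` by `σ` is an
MR minor of `D`. -/
lemma mrminor_lfQuot (n : ℕ) : ∀ {A : Type} [Fintype A] (D : Digraph A),
    Fintype.card A = n → D.LoopFree → ∀ (σ : Setoid A),
    (∀ a b, σ.r a b → Relation.ReflTransGen (fun x y => D.Adj x y ∧ σ.r x y) a b) →
    ∀ {B : Type} {M : Digraph B}, DigraphIso M (lfQuot D σ) → MRMinor M D := by
  induction n using Nat.strong_induction_on with
  | _ n ih =>
  intro A _ D hcard hD σ hconn B M hiso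
  classical
  by_cases hsing : ∀ a b, σ.r a b → a = b
  · -- all classes are singletons: the quotient is isomorphic to `D`
    refine .of_iso (digraphIso_trans hiso ⟨⟨Quotient.lift id hsing, Quotient.mk σ,
      fun X => ?_, fun a => rfl⟩, fun X Y => ?_⟩)
    · induction X using Quotient.ind; rfl
    · induction X using Quotient.ind with | _ p => ?_
      induction Y using Quotient.ind with | _ q => ?_
      show (¬_ ∧ ∃ a b, _) ↔ D.Adj p q
      constructor
      · rintro ⟨-, a, b, ha, hb, hab⟩
        rw [hsing a p (Quotient.exact ha), hsing b q (Quotient.exact hb)] at hab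
        exact hab
      · intro h
        refine ⟨fun hq => ?_, p, q, rfl, rfl, h⟩
        · exact hD p ((hsing p q (Quotient.exact hq)) ▸ h)
  · -- some class has two distinct elements: find an intra-class arc and contract it
    push_neg at hsing
    obtain ⟨u, b₀, hr₀, hne₀⟩ := hsing
    rcases (hconn u b₀ hr₀).cases_head with rfl | ⟨v, ⟨hadj, hruv⟩, -⟩
    · exact absurd rfl hne₀
    have huv_ne : u ≠ v := fun h => hD u (h ▸ hadj)
    have hPle : ∀ x y, (pairSetoid u v).r x y → σ.r x y := by
      rintro x y (rfl | ⟨hx, hy⟩)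
      · exact σ.refl _
      · simp only [Set.mem_insert_iff, Set.mem_singleton_iff] at hx hy
        rcases hx with rfl | rfl <;> rcases hy with rfl | rfl
        · exact σ.refl _
        · exact hruv
        · exact σ.symm hruv
        · exact σ.refl _
    have hresp : ∀ (x y x' y' : A), (pairSetoid u v).r x x' → (pairSetoid u v).r y y' →
        σ.r x y = σ.r x' y' := by
      intro x y x' y' hx hy
      have hx' := hPle _ _ hx; have hy' := hPle _ _ hy
      exact propext ⟨fun h => σ.trans (σ.symm hx') (σ.trans h hy'),
        fun h => σ.trans hx' (σ.trans h (σ.symm hy'))⟩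
    set σ' : Setoid (Quotient (pairSetoid u v)) :=
      ⟨fun X Y => Quotient.lift₂ σ.r hresp X Y, by
        refine ⟨fun X => ?_, fun {X Y} h => ?_, fun {X Y Z} h₁ h₂ => ?_⟩
        · induction X using Quotient.ind; exact σ.refl _
        · revert h; refine Quotient.inductionOn₂ X Y ?_
          intro x y h; exact σ.symm h
        · revert h₁ h₂; refine Quotient.inductionOn₃ X Y Z ?_
          intro x y z h₁ h₂; exact σ.trans h₁ h₂⟩ with hσ'
    -- loop-freeness of the contracted graph
    have hD'lf : (D.contractArc u v).LoopFree := by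
      rintro X ⟨x, y, hx, hy, hadj', hno⟩
      rcases Quotient.exact (hx.trans hy.symm) with rfl | ⟨hxm, hym⟩
      · exact hD x hadj'
      · exact hno ⟨fun h => hD x (h ▸ hadj'), hxm, hym⟩
    -- intra-class connectivity in the contracted graph
    have hconn' : ∀ X Y, σ'.r X Y →
        Relation.ReflTransGen
          (fun P' Q' => (D.contractArc u v).Adj P' Q' ∧ σ'.r P' Q') X Y := by
      intro X Y
      refine Quotient.inductionOn₂ X Y ?_
      intro x y hr
      have hpath := hconn x y hr
      clear hr
      induction hpath with
      | refl => exact .refl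
      | tail _ hstep ihp =>
        rename_i c d _
        by_cases hq : (Quotient.mk (pairSetoid u v) c) = (Quotient.mk (pairSetoid u v) d)
        · exact hq ▸ ihp
        · exact ihp.tail ⟨⟨c, d, rfl, rfl, hstep.1,
            fun h => hq (Quotient.sound (Or.inr ⟨h.2.1, h.2.2⟩))⟩, hstep.2⟩
    -- cardinality decreases
    have hEq1 : Quotient (pairSetoid u v) ≃ {x : A // x ≠ v} := by
      refine ⟨Quotient.lift (fun x => if h : x = v then (⟨u, huv_ne⟩ : {x : A // x ≠ v})
        else ⟨x, h⟩) ?_, fun x => Quotient.mk (pairSetoid u v) x.1, ?_, ?_⟩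
      · rintro x y (rfl | ⟨hx, hy⟩)
        · rfl
        · simp only [Set.mem_insert_iff, Set.mem_singleton_iff] at hx hy
          have key : ∀ z, z = u ∨ z = v →
              (if h : z = v then (⟨u, huv_ne⟩ : {x : A // x ≠ v}) else ⟨z, h⟩)
                = ⟨u, huv_ne⟩ := by
            rintro z (rfl | rfl)
            · rw [dif_neg huv_ne]
            · rw [dif_pos rfl]
          rw [key x hx, key y hy]
      · intro X
        induction X using Quotient.ind with | _ x => ?_
        by_cases h : x = v
        · subst h
          simp only [Quotient.lift_mk, dif_pos]
          exact Quotient.sound (Or.inr ⟨by simp, by simp⟩)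
        · simp only [Quotient.lift_mk, dif_neg h]
      · rintro ⟨x, hx⟩
        simp only [Quotient.lift_mk, dif_neg hx]
    letI : Fintype (Quotient (pairSetoid u v)) := Fintype.ofEquiv _ hEq1.symm
    have hlt : Fintype.card (Quotient (pairSetoid u v)) < n := by
      rw [← hcard]
      calc Fintype.card (Quotient (pairSetoid u v)) = Fintype.card {x : A // x ≠ v} :=
            Fintype.card_congr hEq1
        _ < Fintype.card A := Fintype.card_subtype_lt (x := v) (by simp)
    -- the loop-free quotients are isomorphic
    have hEq2iso : DigraphIso (lfQuot D σ) (lfQuot (D.contractArc u v) σ') := by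
      refine ⟨⟨Quotient.lift (fun x => (Quotient.mk σ' (Quotient.mk (pairSetoid u v) x)))
        (fun x y h => Quotient.sound (show σ'.r _ _ from h)),
        Quotient.lift (Quotient.lift (fun x => Quotient.mk σ x)
          (fun x y h => Quotient.sound (hPle x y h))) ?_, ?_, ?_⟩, ?_⟩
      · intro X Y h
        revert h
        refine Quotient.inductionOn₂ X Y ?_
        intro x y h
        exact Quotient.sound h
      · intro X; induction X using Quotient.ind; rfl
      · intro X
        induction X using Quotient.ind with | _ x => ?_
        induction x using Quotient.ind; rfl
      · intro X Y
        refine Quotient.inductionOn₂ X Y ?_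
        intro p q
        show (¬_ ∧ ∃ a b, _) ↔ (¬_ ∧ ∃ a b, _)
        constructor
        · rintro ⟨hne, x, y, hx, hy, hxy⟩
          have hxp : σ.r x p := Quotient.exact hx
          have hyq : σ.r y q := Quotient.exact hy
          have hnxy : ¬ σ.r x y := fun h =>
            hne (Quotient.sound (σ.trans (σ.symm hxp) (σ.trans h hyq)))
          refine ⟨fun h => ?_,
            Quotient.mk (pairSetoid u v) x, Quotient.mk (pairSetoid u v) y,
            Quotient.sound (show σ'.r _ _ from hxp), Quotient.sound (show σ'.r _ _ from hyq),
            x, y, rfl, rfl, hxy, fun h => hnxy (hPle x y (Or.inr ⟨h.2.1, h.2.2⟩))⟩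
          · have h2 : σ'.r (Quotient.mk (pairSetoid u v) p) (Quotient.mk (pairSetoid u v) q) :=
              Quotient.exact (show (Quotient.mk σ' (Quotient.mk (pairSetoid u v) p)) =
                Quotient.mk σ' (Quotient.mk (pairSetoid u v) q) from h)
            exact hne (Quotient.sound (show σ.r p q from h2))
        · rintro ⟨hne, X', Y', hX', hY', hadj'⟩
          obtain ⟨x, y, hx, hy, hxy, -⟩ := hadj'
          subst hx; subst hy
          have hxp' : σ'.r (Quotient.mk (pairSetoid u v) x) (Quotient.mk (pairSetoid u v) p) :=
            Quotient.exact (show _ =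
              Quotient.mk σ' (Quotient.mk (pairSetoid u v) p) from hX')
          have hyq' : σ'.r (Quotient.mk (pairSetoid u v) y) (Quotient.mk (pairSetoid u v) q) :=
            Quotient.exact (show _ =
              Quotient.mk σ' (Quotient.mk (pairSetoid u v) q) from hY')
          have hxp : σ.r x p := hxp'
          have hyq : σ.r y q := hyq'
          refine ⟨fun h => hne ?_, x, y, Quotient.sound hxp, Quotient.sound hyq, hxy⟩
          show (Quotient.mk σ' (Quotient.mk (pairSetoid u v) p)) =
            Quotient.mk σ' (Quotient.mk (pairSetoid u v) q)
          exact Quotient.sound (show σ'.r _ _ from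
            (show σ.r p q from Quotient.exact h))
    exact MRMinor.contract u v hadj
      (ih _ hlt (D.contractArc u v) rfl hD'lf σ' hconn' (digraphIso_trans hiso hEq2iso))

/-- If the fibers of `κ : W → V(F) ⊕ E(F)` are strongly connected within each fiber,
inter-fiber arcs follow the `dsplit` pattern, and each `dsplit` arc is realized, then
`dsplit F` is an MR minor of `D`. -/
lemma mrminor_dsplit_of_map {α : Type} (F : SimpleGraph α) {W : Type} [Fintype W]
    (D : Digraph W) (hD : D.LoopFree) (κ : W → α ⊕ F.edgeSet) (rep : α ⊕ F.edgeSet → W)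
    (hrep : ∀ i, κ (rep i) = i)
    (hconn : ∀ a b, κ a = κ b →
      Relation.ReflTransGen (fun x y => D.Adj x y ∧ κ x = κ y) a b)
    (hinter : ∀ a b, D.Adj a b → κ a ≠ κ b →
      ∃ (e : F.edgeSet) (w : α), w ∈ e.1 ∧ κ a = Sum.inr e ∧ κ b = Sum.inl w)
    (hreal : ∀ (e : F.edgeSet) (w : α), w ∈ e.1 →
      ∃ a b, κ a = Sum.inr e ∧ κ b = Sum.inl w ∧ D.Adj a b) :
    MRMinor (dsplit F) D := by
  set σ : Setoid W := ⟨fun a b => κ a = κ b,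
    ⟨fun _ => rfl, fun h => h.symm, fun h₁ h₂ => h₁.trans h₂⟩⟩ with hσ
  apply mrminor_lfQuot (Fintype.card W) D rfl hD σ hconn
  refine ⟨⟨fun i => Quotient.mk σ (rep i), Quotient.lift κ (fun a b h => h),
    fun i => hrep i, ?_⟩, ?_⟩
  · intro X
    induction X using Quotient.ind with | _ w => ?_
    exact Quotient.sound (show κ _ = κ w from hrep (κ w))
  · intro x y
    constructor
    · intro h
      match x, y, h with
      | Sum.inr e, Sum.inl w, h =>
        obtain ⟨a, b, ha, hb, hab⟩ := hreal e w h
        refine ⟨fun hq => ?_, a, b,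
          Quotient.sound (show κ a = κ (rep (Sum.inr e)) from ha.trans (hrep _).symm),
          Quotient.sound (show κ b = κ (rep (Sum.inl w)) from hb.trans (hrep _).symm), hab⟩
        have : κ (rep (Sum.inr e)) = κ (rep (Sum.inl w)) := Quotient.exact hq
        rw [hrep, hrep] at this
        cases this
    · rintro ⟨hne, a, b, ha, hb, hab⟩
      have hax : κ a = x := (show κ a = κ (rep x) from Quotient.exact ha).trans (hrep x)
      have hby : κ b = y := (show κ b = κ (rep y) from Quotient.exact hb).trans (hrep y)
      have hκne : κ a ≠ κ b := by
        intro h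
        exact hne (Quotient.sound (show κ (rep x) = κ (rep y) by
          rw [hrep, hrep, ← hax, ← hby, h]))
      obtain ⟨e, w, hw, hae, hbw⟩ := hinter a b hab hκne
      rw [hax] at hae; rw [hby] at hbw
      subst hae; subst hbw
      exact hw

end Aux18

theorem stmt18 {α V : Type} [Fintype α] [Fintype V]
    (F : SimpleGraph α) (k ℓ : ℕ) (hk : Fintype.card α = k) (hℓ : F.edgeSet.ncard = ℓ)
    (H : Digraph V) (hH : H.LoopFree) (hs : k + ℓ ≤ H.numSources) :
    ∃ H' : Digraph V, ArcSupergraph H H' ∧ MRMinor (dsplit F) H' := by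
  classical
  haveI : Fintype ↥F.edgeSet := Fintype.ofFinite _
  haveI : Finite (Quotient H.sccSetoid) := Quotient.finite _
  haveI : Fintype (Quotient H.sccSetoid) := Fintype.ofFinite _
  have hcardI : Fintype.card (α ⊕ F.edgeSet) ≤
      Fintype.card ↥{X : Quotient H.sccSetoid | ∀ Y, ¬ H.cond.Adj Y X} := by
    rw [Fintype.card_sum, hk]
    have h1 : Fintype.card ↥F.edgeSet = ℓ := by
      rw [← Nat.card_eq_fintype_card, Nat.card_coe_set_eq, hℓ]
    have h2 : Fintype.card ↥{X : Quotient H.sccSetoid | ∀ Y, ¬ H.cond.Adj Y X}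
        = H.numSources := by
      rw [← Nat.card_eq_fintype_card, Nat.card_coe_set_eq]; rfl
    rw [h1, h2]; exact hs
  obtain ⟨f⟩ := Function.Embedding.nonempty_of_card_le hcardI
  set ι : α ⊕ F.edgeSet → Quotient H.sccSetoid := fun i => (f i).1 with hι
  have hι_inj : Function.Injective ι := fun i j h => f.injective (Subtype.ext h)
  have hιS : ∀ i Y, ¬ H.cond.Adj Y (ι i) := fun i => (f i).2
  have hsrc : ∀ (i) (a b : V), H.Adj a b → Quotient.mk H.sccSetoid b = ι i →
      Quotient.mk H.sccSetoid a = ι i := by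
    intro i a b hab hb
    by_contra h
    exact hιS i (Quotient.mk H.sccSetoid a) ⟨h, a, b, rfl, hb, hab⟩
  have hreachsrc : ∀ (i) (a b : V), H.Reaches a b → Quotient.mk H.sccSetoid b = ι i →
      Quotient.mk H.sccSetoid a = ι i := by
    intro i a b hr hb
    induction hr using Relation.ReflTransGen.head_induction_on with
    | refl => exact hb
    | head hadj _ ihp => exact hsrc i _ _ hadj ihp
  have hpath : ∀ (i) (a b : V), H.Reaches a b → Quotient.mk H.sccSetoid b = ι i →
      Quotient.mk H.sccSetoid a = ι i →
      Relation.ReflTransGen (fun x y => H.Adj x y ∧ Quotient.mk H.sccSetoid x = ι i ∧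
        Quotient.mk H.sccSetoid y = ι i) a b := by
    intro i a b hr hb
    induction hr using Relation.ReflTransGen.head_induction_on with
    | refl => intro _; exact .refl
    | head hadj h' ihp =>
      intro ha
      have hc := hreachsrc i _ _ h' hb
      exact .head ⟨hadj, ha, hc⟩ (ihp hc)
  set H' : Digraph V := ⟨fun a b => a ≠ b ∧ (H.Adj a b ∨
    ((¬ ∃ i, ι i = Quotient.mk H.sccSetoid a) ∧ (¬ ∃ i, ι i = Quotient.mk H.sccSetoid b)) ∨
    (∃ (e : F.edgeSet) (w : α), w ∈ e.1 ∧ ι (Sum.inr e) = Quotient.mk H.sccSetoid a ∧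
      ι (Sum.inl w) = Quotient.mk H.sccSetoid b))⟩ with hH'def
  have hadj_iff : ∀ a b : V, H'.Adj a b ↔ (a ≠ b ∧ (H.Adj a b ∨
      ((¬ ∃ i, ι i = Quotient.mk H.sccSetoid a) ∧ (¬ ∃ i, ι i = Quotient.mk H.sccSetoid b)) ∨
      (∃ (e : F.edgeSet) (w : α), w ∈ e.1 ∧ ι (Sum.inr e) = Quotient.mk H.sccSetoid a ∧
        ι (Sum.inl w) = Quotient.mk H.sccSetoid b))) := fun a b => Iff.rfl
  have hlf : H'.LoopFree := fun v h => ((hadj_iff v v).mp h).1 rfl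
  have hsup : ArcSupergraph H H' :=
    ⟨hlf, fun a b h => (hadj_iff a b).mpr ⟨fun he => hH a (he ▸ h), Or.inl h⟩⟩
  have hZstep : ∀ a b : V, H'.Adj a b → (¬ ∃ i, ι i = Quotient.mk H.sccSetoid a) →
      ¬ ∃ i, ι i = Quotient.mk H.sccSetoid b := by
    intro a b hab ha
    rcases ((hadj_iff a b).mp hab).2 with h1 | h1 | h1
    · rintro ⟨i, hi⟩; exact ha ⟨i, (hsrc i a b h1 hi.symm).symm⟩
    · exact h1.2
    · obtain ⟨e, w, -, hea, -⟩ := h1; exact absurd ⟨_, hea⟩ ha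
  have hZreach : ∀ a b : V, H'.Reaches a b → (¬ ∃ i, ι i = Quotient.mk H.sccSetoid a) →
      ¬ ∃ i, ι i = Quotient.mk H.sccSetoid b := by
    intro a b hr ha
    induction hr with
    | refl => exact ha
    | tail _ hstep ihp => exact hZstep _ _ hstep ihp
  by_cases hZ : ∀ v : V, ∃ i, ι i = Quotient.mk H.sccSetoid v
  · -- every vertex lies in a chosen source component
    refine ⟨H', hsup, ?_⟩
    choose κ hκ using hZ
    refine mrminor_dsplit_of_map F H' hlf κ (fun i => (ι i).out) ?_ ?_ ?_ ?_
    · intro i; exact hι_inj ((hκ _).trans (Quotient.out_eq _))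
    · intro a b hab
      have hmk : Quotient.mk H.sccSetoid a = Quotient.mk H.sccSetoid b := by
        rw [← hκ a, ← hκ b, hab]
      obtain ⟨hr1, -⟩ : H.Reaches a b ∧ H.Reaches b a := Quotient.exact hmk
      refine Relation.ReflTransGen.mono ?_ _ _
        (hpath (κ a) a b hr1 (hmk.symm.trans (hκ a).symm) (hκ a).symm)
      rintro x y ⟨hxy, hx, hy⟩
      exact ⟨(hadj_iff x y).mpr ⟨fun he => hH x (he ▸ hxy), Or.inl hxy⟩,
        hι_inj ((hκ x).trans (hx.trans (hy.symm.trans (hκ y).symm)))⟩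
    · intro a b hab hne
      rcases ((hadj_iff a b).mp hab).2 with h1 | h1 | h1
      · exact absurd (hι_inj ((hκ a).trans (hsrc (κ b) a b h1 (hκ b).symm))) hne
      · exact absurd ⟨κ a, hκ a⟩ h1.1
      · obtain ⟨e, w, hw, hea, hwb⟩ := h1
        exact ⟨e, w, hw, hι_inj ((hκ a).trans hea.symm), hι_inj ((hκ b).trans hwb.symm)⟩
    · intro e w hw
      refine ⟨(ι (Sum.inr e)).out, (ι (Sum.inl w)).out,
        hι_inj ((hκ _).trans (Quotient.out_eq _)), hι_inj ((hκ _).trans (Quotient.out_eq _)),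
        (hadj_iff _ _).mpr ⟨?_, Or.inr (Or.inr
          ⟨e, w, hw, (Quotient.out_eq _).symm, (Quotient.out_eq _).symm⟩)⟩⟩
      intro h
      have h2 : ι (Sum.inr e) = ι (Sum.inl w) := by
        rw [← Quotient.out_eq (ι (Sum.inr e)), ← Quotient.out_eq (ι (Sum.inl w)), h]
      cases hι_inj h2
  · -- there is a vertex outside the chosen source components: sink-delete its block
    push_neg at hZ
    obtain ⟨t, ht⟩ := hZ
    have ht' : ¬ ∃ i, ι i = Quotient.mk H.sccSetoid t := by
      rintro ⟨i, hi⟩; exact ht i hi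
    have hback : ∀ v : V, (¬ ∃ i, ι i = Quotient.mk H.sccSetoid v) → H'.Reaches v t := by
      intro v hv
      by_cases hvt : v = t
      · subst hvt; exact .refl
      · exact Relation.ReflTransGen.single
          ((hadj_iff v t).mpr ⟨hvt, Or.inr (Or.inl ⟨hv, ht'⟩)⟩)
    have hfwd : ∀ v : V, (¬ ∃ i, ι i = Quotient.mk H.sccSetoid v) → H'.Reaches t v := by
      intro v hv
      by_cases hvt : t = v
      · subst hvt; exact .refl
      · exact Relation.ReflTransGen.single
          ((hadj_iff t v).mpr ⟨hvt, Or.inr (Or.inl ⟨ht', hv⟩)⟩)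
    have hsink : H'.IsSinkVert t := fun v hv => hback v (hZreach t v hv ht')
    refine ⟨H', hsup, MRMinor.sink_del t hsink ?_⟩
    have hW : ∀ v : V, ¬ (H'.Reaches v t ∧ H'.Reaches t v) ↔
        ∃ i, ι i = Quotient.mk H.sccSetoid v := by
      intro v; constructor
      · intro h; by_contra hno; exact h ⟨hback v hno, hfwd v hno⟩
      · rintro ⟨i, hi⟩ ⟨-, h2⟩; exact hZreach t v h2 ht' ⟨i, hi⟩
    have hDlf : (H'.sinkDelete t).LoopFree := fun a h => ((hadj_iff _ _).mp h).1 rfl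
    choose κ hκ using fun (w : {v : V // ¬ (H'.Reaches v t ∧ H'.Reaches t v)}) =>
      (hW w.1).mp w.2
    refine mrminor_dsplit_of_map F (H'.sinkDelete t) hDlf κ
      (fun i => ⟨(ι i).out, (hW _).mpr ⟨i, (Quotient.out_eq _).symm⟩⟩) ?_ ?_ ?_ ?_
    · intro i; exact hι_inj ((hκ _).trans (Quotient.out_eq _))
    · intro a b hab
      have hmk : Quotient.mk H.sccSetoid a.1 = Quotient.mk H.sccSetoid b.1 := by
        rw [← hκ a, ← hκ b, hab]
      obtain ⟨hr1, -⟩ : H.Reaches a.1 b.1 ∧ H.Reaches b.1 a.1 := Quotient.exact hmk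
      have hpth := hpath (κ a) a.1 b.1 hr1 (hmk.symm.trans (hκ a).symm) (hκ a).symm
      have hlift : ∀ (x y : V), Relation.ReflTransGen (fun p q => H.Adj p q ∧
          Quotient.mk H.sccSetoid p = ι (κ a) ∧ Quotient.mk H.sccSetoid q = ι (κ a)) x y →
          ∀ (hx : ¬(H'.Reaches x t ∧ H'.Reaches t x))
            (hy : ¬(H'.Reaches y t ∧ H'.Reaches t y)),
          Relation.ReflTransGen (fun p q : {v : V // ¬(H'.Reaches v t ∧ H'.Reaches t v)} =>
            (H'.sinkDelete t).Adj p q ∧ κ p = κ q) ⟨x, hx⟩ ⟨y, hy⟩ := by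
        intro x y hxy
        induction hxy with
        | refl => intro hx hy; exact .refl
        | tail _ hstep ihp =>
          intro hx hy
          rename_i c d _
          have hcmem : ¬(H'.Reaches c t ∧ H'.Reaches t c) :=
            (hW c).mpr ⟨κ a, hstep.2.1.symm⟩
          refine (ihp hx hcmem).tail ⟨(hadj_iff c d).mpr
            ⟨fun he => hH c (he ▸ hstep.1), Or.inl hstep.1⟩, ?_⟩
          exact hι_inj ((hκ ⟨c, hcmem⟩).trans
            (hstep.2.1.trans (hstep.2.2.symm.trans (hκ ⟨d, hy⟩).symm)))
      exact hlift a.1 b.1 hpth a.2 b.2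
    · intro a b hab hne
      rcases ((hadj_iff a.1 b.1).mp hab).2 with h1 | h1 | h1
      · exact absurd (hι_inj ((hκ a).trans (hsrc (κ b) a.1 b.1 h1 (hκ b).symm))) hne
      · exact absurd ⟨κ a, hκ a⟩ h1.1
      · obtain ⟨e, w, hw, hea, hwb⟩ := h1
        exact ⟨e, w, hw, hι_inj ((hκ a).trans hea.symm), hι_inj ((hκ b).trans hwb.symm)⟩
    · intro e w hw
      refine ⟨⟨(ι (Sum.inr e)).out, (hW _).mpr ⟨_, (Quotient.out_eq _).symm⟩⟩,
        ⟨(ι (Sum.inl w)).out, (hW _).mpr ⟨_, (Quotient.out_eq _).symm⟩⟩,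
        hι_inj ((hκ _).trans (Quotient.out_eq _)), hι_inj ((hκ _).trans (Quotient.out_eq _)),
        (hadj_iff _ _).mpr ⟨?_, Or.inr (Or.inr
          ⟨e, w, hw, (Quotient.out_eq _).symm, (Quotient.out_eq _).symm⟩)⟩⟩
      intro h
      have h' : (ι (Sum.inr e)).out = (ι (Sum.inl w)).out := h
      have h2 : ι (Sum.inr e) = ι (Sum.inl w) := by
        rw [← Quotient.out_eq (ι (Sum.inr e)), ← Quotient.out_eq (ι (Sum.inl w)), h']
      cases hι_inj h2

end
end

section
/- Let H be a loop-free digraph with s(H) ≤ c, and let H' be a quotient of an arc supergraph of H. Then the reachability hypergraph R(H') has at most c hyperedges, i.e., |E(R(H'))| ≤ c. -/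
noncomputable section

lemma aux_reaches_mono {V : Type} {G G' : Digraph V} (h : ∀ u v, G.Adj u v → G'.Adj u v)
    {u v : V} (hr : G.Reaches u v) : G'.Reaches u v :=
  Relation.ReflTransGen.mono (fun a b => h a b) u v hr

lemma aux_reaches_quot {V : Type} (G : Digraph V) (σ : Setoid V) {u v : V}
    (hr : G.Reaches u v) :
    (G.quot σ).Reaches (Quotient.mk σ u) (Quotient.mk σ v) := by
  induction hr with
  | refl => exact .refl
  | tail _ h2 ih => exact ih.tail ⟨_, _, rfl, rfl, h2⟩

lemma aux_reachSet_eq {V : Type} (G : Digraph V) {u v : V} (h1 : G.Reaches u v)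
    (h2 : G.Reaches v u) : G.reachSet u = G.reachSet v :=
  Set.ext fun _ => ⟨fun hx => h2.trans hx, fun hx => h1.trans hx⟩

lemma aux_exists_source_reaches {V : Type} [Fintype V] (H : Digraph V) (a : V) :
    ∃ u, H.InSourceComp u ∧ H.Reaches u a := by
  classical
  obtain ⟨u, hu, hmax⟩ := Finset.exists_max_image
    (Finset.univ.filter fun u => H.Reaches u a)
    (fun u => (H.reachSet u).ncard)
    ⟨a, by simp only [Finset.mem_filter, Finset.mem_univ, true_and]
           exact Relation.ReflTransGen.refl⟩
  simp only [Finset.mem_filter, Finset.mem_univ, true_and] at hu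
  refine ⟨u, ?_, hu⟩
  intro w hw
  by_contra hnw
  have hsub : H.reachSet u ⊂ H.reachSet w := by
    constructor
    · intro x hx; exact hw.trans hx
    · intro hcon
      exact hnw (hcon (Relation.ReflTransGen.refl : H.Reaches w w))
  have hlt := Set.ncard_lt_ncard hsub (Set.toFinite _)
  have := hmax w (by simp only [Finset.mem_filter, Finset.mem_univ, true_and]
                     exact hw.trans hu)
  omega

lemma aux_source_cond {V : Type} (H : Digraph V) {u : V} (hu : H.InSourceComp u) :
    ∀ Y, ¬ H.cond.Adj Y (Quotient.mk H.sccSetoid u) := by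
  rintro Y ⟨hne, a, b, rfl, hb, hab⟩
  have hbu : H.sccSetoid.r b u := Quotient.exact hb
  have hau : H.Reaches a u := (Relation.ReflTransGen.single hab).trans hbu.1
  have hua : H.Reaches u a := hu a hau
  exact hne (Quotient.sound ⟨hau, hua⟩)

theorem stmt19 {V : Type} [Fintype V] (H : Digraph V) (hH : H.LoopFree)
    (c : ℕ) (hs : H.numSources ≤ c) (A : Digraph V) (hA : ArcSupergraph H A)
    (σ : Setoid V) :
    (A.quot σ).reachHyp.edges.ncard ≤ c := by
  classical
  set G := A.quot σ with hG
  rcases Set.eq_empty_or_nonempty G.reachHyp.edges with hemp | ⟨e0, he0⟩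
  · simp [hemp]
  have hV : Nonempty V := by
    obtain ⟨s, -, -⟩ := he0
    obtain ⟨a, -⟩ := Quotient.exists_rep s
    exact ⟨a⟩
  have key : ∀ e ∈ G.reachHyp.edges,
      ∃ u : V, H.InSourceComp u ∧ e = G.reachSet (Quotient.mk σ u) := by
    rintro e ⟨s, hsrc, rfl⟩
    obtain ⟨a, rfl⟩ := Quotient.exists_rep s
    obtain ⟨u, hu, hua⟩ := aux_exists_source_reaches H a
    have hGua : G.Reaches (Quotient.mk σ u) (Quotient.mk σ a) :=
      aux_reaches_quot A σ (aux_reaches_mono hA.2 hua)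
    have hGau : G.Reaches (Quotient.mk σ a) (Quotient.mk σ u) := hsrc _ hGua
    exact ⟨u, hu, (aux_reachSet_eq G hGua hGau).symm⟩
  choose! u hu1 hu2 using key
  have hle : G.reachHyp.edges.ncard ≤ H.numSources := by
    apply Set.ncard_le_ncard_of_injOn (fun e => Quotient.mk H.sccSetoid (u e))
    · intro e he
      exact aux_source_cond H (hu1 e he)
    · intro e1 h1 e2 h2 heq
      have hr : H.sccSetoid.r (u e1) (u e2) := Quotient.exact heq
      have h12 : G.Reaches (Quotient.mk σ (u e1)) (Quotient.mk σ (u e2)) :=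
        aux_reaches_quot A σ (aux_reaches_mono hA.2 hr.1)
      have h21 : G.Reaches (Quotient.mk σ (u e2)) (Quotient.mk σ (u e1)) :=
        aux_reaches_quot A σ (aux_reaches_mono hA.2 hr.2)
      rw [hu2 e1 h1, hu2 e2 h2]
      exact aux_reachSet_eq G h12 h21
  exact hle.trans hs

end
end
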